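/- Let S be a convex cost process, D a convex portfolio constraint process, and C the set of claim processes superhedgeable with zero cost. Assume C is closed in probability. Then for every integrable claim process c ∈ M^1: c ∈ C if and only if E ∑_{t=0}^T c_t y_t ≤ 1 for every essentially bounded claim process y ∈ M^∞ with σ_{C¹}(y) ≤ 1. -/

import Mathlib

open MeasureTheory Filter

noncomputable section

/-- The portfolio held before time `t`, with the convention `x₋₁ = 0`. -/
def prevP {Ω : Type*} {T : ℕ} {E : Type*} [Zero E]
    (x : Fin (T + 1) → Ω → E) (t : Fin (T + 1)) : Ω → E :=
  if t.1 = 0 then 0 else x ⟨t.1 - 1, lt_of_le_of_lt (Nat.sub_le _ _) t.isLt⟩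

/-- The recession cone of a set in a real vector space. -/
def rcone {V : Type*} [AddCommMonoid V] [SMul ℝ V] (A : Set V) : Set V :=
  {y | ∀ a ∈ A, ∀ α : ℝ, 0 < α → a + α • y ∈ A}

variable {Ω : Type*} {m0 : MeasurableSpace Ω} {T : ℕ} {J : Type*} [Fintype J]

/-- A convex cost process: `S t · ω` is convex, lsc, vanishes at `0`, never `-∞`, and
`S t` is `B(ℝ^J) ⊗ ℱ t`-measurable. -/
structure CostProcess (ℱ : Filtration (Fin (T + 1)) m0) (J : Type*) [Fintype J] where
  S : Fin (T + 1) → (J → ℝ) → Ω → EReal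
  ne_bot : ∀ t x ω, S t x ω ≠ ⊥
  convex : ∀ t ω (x y : J → ℝ) (a b : ℝ), 0 ≤ a → 0 ≤ b → a + b = 1 →
    S t (a • x + b • y) ω ≤ (a : EReal) * S t x ω + (b : EReal) * S t y ω
  lsc : ∀ t ω, LowerSemicontinuous fun x => S t x ω
  zero : ∀ t ω, S t 0 ω = 0
  meas : ∀ t, Measurable[(inferInstance : MeasurableSpace (J → ℝ)).prod (ℱ t)]
    fun p : (J → ℝ) × Ω => S t p.1 p.2

/-- A convex portfolio constraint process: each `D t ω` is closed, convex, contains `0`,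
and `ω ↦ D t ω` is `ℱ t`-measurable. -/
structure ConstraintProcess (ℱ : Filtration (Fin (T + 1)) m0) (J : Type*) [Fintype J] where
  D : Fin (T + 1) → Ω → Set (J → ℝ)
  closed : ∀ t ω, IsClosed (D t ω)
  convex : ∀ t ω, Convex ℝ (D t ω)
  zero_mem : ∀ t ω, (0 : J → ℝ) ∈ D t ω
  meas : ∀ t (U : Set (J → ℝ)), IsOpen U →
    MeasurableSet[ℱ t] {ω | (D t ω ∩ U).Nonempty}

/-- The set `M` of adapted claim processes. -/
def ClaimM (ℱ : Filtration (Fin (T + 1)) m0) : Set (Fin (T + 1) → Ω → ℝ) :=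
  {c | Adapted ℱ c}

/-- The set `M₋` of almost surely nonpositive claim processes. -/
def Mminus (P : Measure Ω) (ℱ : Filtration (Fin (T + 1)) m0) :
    Set (Fin (T + 1) → Ω → ℝ) :=
  {c | c ∈ ClaimM ℱ ∧ ∀ t, ∀ᵐ ω ∂P, c t ω ≤ 0}

/-- The set `C` of claim processes superhedgeable with zero cost. -/
def Cset (P : Measure Ω) (ℱ : Filtration (Fin (T + 1)) m0)
    (S : CostProcess ℱ J) (D : ConstraintProcess ℱ J) :
    Set (Fin (T + 1) → Ω → ℝ) :=
  {c | c ∈ ClaimM ℱ ∧ ∃ x : Fin (T + 1) → Ω → (J → ℝ), Adapted ℱ x ∧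
    x (Fin.last T) = 0 ∧
    ∀ᵐ ω ∂P, ∀ t, x t ω ∈ D.D t ω ∧
      S.S t (x t ω - prevP x t ω) ω + (c t ω : EReal) ≤ 0}

/-- The set `M¹` of integrable claim processes. -/
def M1 (P : Measure Ω) (ℱ : Filtration (Fin (T + 1)) m0) :
    Set (Fin (T + 1) → Ω → ℝ) :=
  {c | c ∈ ClaimM ℱ ∧ ∀ t, Integrable (c t) P}

/-- The set `M^∞` of essentially bounded claim processes. -/
def Minf (P : Measure Ω) (ℱ : Filtration (Fin (T + 1)) m0) :
    Set (Fin (T + 1) → Ω → ℝ) :=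
  {c | c ∈ ClaimM ℱ ∧ ∀ t, MemLp (c t) ⊤ P}

/-- The bilinear pairing `E ∑ₜ cₜ yₜ`. -/
def pairing (P : Measure Ω) (c y : Fin (T + 1) → Ω → ℝ) : ℝ :=
  ∫ ω, ∑ t, c t ω * y t ω ∂P

/-- The support function `σ_{C¹}(y) = sup_{c ∈ C¹} E ∑ₜ cₜ yₜ` of a set of integrable
claim processes. -/
def sigmaSup (P : Measure Ω) (A : Set (Fin (T + 1) → Ω → ℝ))
    (y : Fin (T + 1) → Ω → ℝ) : EReal :=
  sSup ((fun c => ((pairing P c y : ℝ) : EReal)) '' A)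

/-- `A` is closed in probability (within the space `M` of adapted claim processes). -/
def ClosedInProb (P : Measure Ω) (ℱ : Filtration (Fin (T + 1)) m0)
    (A : Set (Fin (T + 1) → Ω → ℝ)) : Prop :=
  ∀ cs : ℕ → Fin (T + 1) → Ω → ℝ, (∀ n, cs n ∈ A) →
    ∀ c ∈ ClaimM ℱ, (∀ t, TendstoInMeasure P (fun n => cs n t) atTop (c t)) → c ∈ A


section Aux
set_option linter.unusedSectionVars false
set_option linter.unusedVariables false

variable (P : Measure Ω) [IsProbabilityMeasure P] (ℱ : Filtration (Fin (T + 1)) m0)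
variable (S : CostProcess ℱ J) (D : ConstraintProcess ℱ J)

lemma zero_mem_Cset : (0 : Fin (T + 1) → Ω → ℝ) ∈ Cset P ℱ S D := by
  refine ⟨fun t => measurable_const, 0, fun t => measurable_const, rfl, ?_⟩
  filter_upwards with ω
  intro t
  refine ⟨D.zero_mem t ω, ?_⟩
  have hprev : prevP (0 : Fin (T + 1) → Ω → (J → ℝ)) t ω = 0 := by
    unfold prevP
    split <;> simp
  simp only [Pi.zero_apply, hprev, sub_zero, S.zero t ω]
  simp

lemma zero_mem_M1 : (0 : Fin (T + 1) → Ω → ℝ) ∈ M1 P ℱ :=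
  ⟨fun t => measurable_const, fun t => integrable_zero _ _ _⟩

lemma Cset_congr_ae {c c' : Fin (T + 1) → Ω → ℝ} (hc' : c' ∈ Cset P ℱ S D)
    (hc : c ∈ ClaimM ℱ) (h : ∀ t, c t =ᵐ[P] c' t) : c ∈ Cset P ℱ S D := by
  obtain ⟨-, x, hx, hxT, hae⟩ := hc'
  refine ⟨hc, x, hx, hxT, ?_⟩
  have hall : ∀ᵐ ω ∂P, ∀ t, c t ω = c' t ω := ae_all_iff.2 fun t => h t
  filter_upwards [hae, hall] with ω h1 h2 t
  rw [h2 t]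
  exact h1 t

/-- From `S x + c ≤ 0` (`c` real), `S x` is real and its value satisfies the inequality. -/
lemma real_of_cost_le {v : EReal} (hv : v ≠ ⊥) {r : ℝ} (h : v + (r : EReal) ≤ 0) :
    ∃ s : ℝ, v = (s : EReal) ∧ s + r ≤ 0 := by
  have hvtop : v ≠ ⊤ := by
    intro htop
    rw [htop, EReal.top_add_coe, top_le_iff] at h
    exact EReal.zero_ne_top h
  refine ⟨v.toReal, (EReal.coe_toReal hvtop hv).symm, ?_⟩
  have := EReal.coe_toReal hvtop hv
  rw [← this, ← EReal.coe_add] at h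
  exact_mod_cast h

lemma Cset_convex {c₁ c₂ : Fin (T + 1) → Ω → ℝ} (h₁ : c₁ ∈ Cset P ℱ S D)
    (h₂ : c₂ ∈ Cset P ℱ S D) {a b : ℝ} (ha : 0 ≤ a) (hb : 0 ≤ b) (hab : a + b = 1) :
    (fun t ω => a * c₁ t ω + b * c₂ t ω) ∈ Cset P ℱ S D := by
  obtain ⟨hadapt₁, x₁, hx₁, hx₁T, hae₁⟩ := h₁
  obtain ⟨hadapt₂, x₂, hx₂, hx₂T, hae₂⟩ := h₂
  refine ⟨fun t => ((hadapt₁ t).const_mul a).add ((hadapt₂ t).const_mul b), 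
    fun t ω => a • x₁ t ω + b • x₂ t ω, 
    fun t => ((hx₁ t).const_smul a).add ((hx₂ t).const_smul b), ?_, ?_⟩
  · funext ω; simp [hx₁T, hx₂T]
  · filter_upwards [hae₁, hae₂] with ω k₁ k₂ t
    obtain ⟨hD₁, hS₁⟩ := k₁ t
    obtain ⟨hD₂, hS₂⟩ := k₂ t
    constructor
    · exact D.convex t ω hD₁ hD₂ ha hb hab
    · have hprev : prevP (fun t ω => a • x₁ t ω + b • x₂ t ω) t ω
          = a • prevP x₁ t ω + b • prevP x₂ t ω := by
        unfold prevP
        split <;> simp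
      have hdiff : (fun t ω => a • x₁ t ω + b • x₂ t ω) t ω
            - prevP (fun t ω => a • x₁ t ω + b • x₂ t ω) t ω
          = a • (x₁ t ω - prevP x₁ t ω) + b • (x₂ t ω - prevP x₂ t ω) := by
        rw [hprev]; module
      obtain ⟨s₁, hs₁, hs₁le⟩ := real_of_cost_le (S.ne_bot t _ ω) hS₁
      obtain ⟨s₂, hs₂, hs₂le⟩ := real_of_cost_le (S.ne_bot t _ ω) hS₂
      have hconv := S.convex t ω (x₁ t ω - prevP x₁ t ω) (x₂ t ω - prevP x₂ t ω) a b ha hb hab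
      rw [hs₁, hs₂, ← EReal.coe_mul, ← EReal.coe_mul, ← EReal.coe_add] at hconv
      rw [hdiff]
      calc S.S t (a • (x₁ t ω - prevP x₁ t ω) + b • (x₂ t ω - prevP x₂ t ω)) ω
            + ((a * c₁ t ω + b * c₂ t ω : ℝ) : EReal)
          ≤ ((a * s₁ + b * s₂ : ℝ) : EReal) + ((a * c₁ t ω + b * c₂ t ω : ℝ) : EReal) := by
            exact add_le_add hconv le_rfl
        _ = (((a * s₁ + b * s₂) + (a * c₁ t ω + b * c₂ t ω) : ℝ) : EReal) := by
            norm_cast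
        _ ≤ 0 := by
            rw [← EReal.coe_zero, EReal.coe_le_coe_iff]
            nlinarith [mul_le_mul_of_nonneg_left hs₁le ha, mul_le_mul_of_nonneg_left hs₂le hb]

end Aux

section Dual
set_option linter.unusedSectionVars false
set_option linter.unusedVariables false

variable (P : Measure Ω) [IsProbabilityMeasure P]

lemma mul_ite_sign (x : ℝ) : x * (if 0 ≤ x then (1:ℝ) else -1) = |x| := by
  split <;> rename_i h
  · rw [mul_one, abs_of_nonneg h]
  · rw [mul_neg_one, abs_of_neg (lt_of_not_ge h)]

lemma L1_dual_rep (φ : Lp ℝ 1 P →L[ℝ] ℝ) :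
    ∃ g : Ω → ℝ, StronglyMeasurable g ∧ (∀ ω, |g ω| ≤ ‖φ‖) ∧
      ∀ u : Lp ℝ 1 P, φ u = ∫ ω, g ω * (u : Ω → ℝ) ω ∂P := by
  classical
  have hmem1 : ∀ h : Lp ℝ 2 P, MemLp (h : Ω → ℝ) 1 P :=
    fun h => (Lp.memLp h).mono_exponent one_le_two
  set i : Lp ℝ 2 P → Lp ℝ 1 P := fun h => (hmem1 h).toLp _ with hi
  have hicoe : ∀ h, (i h : Ω → ℝ) =ᵐ[P] (h : Ω → ℝ) := fun h => (hmem1 h).coeFn_toLp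
  have hinorm : ∀ h, ‖i h‖ ≤ ‖h‖ := by
    intro h
    rw [Lp.norm_def, Lp.norm_def]
    refine ENNReal.toReal_mono (Lp.eLpNorm_ne_top h) ?_
    rw [eLpNorm_congr_ae (hicoe h)]
    exact eLpNorm_le_eLpNorm_of_exponent_le one_le_two (Lp.aestronglyMeasurable h)
  have hiadd : ∀ h h', i (h + h') = i h + i h' := by
    intro h h'
    refine Lp.ext ?_
    filter_upwards [hicoe (h + h'), hicoe h, hicoe h', Lp.coeFn_add h h',
      Lp.coeFn_add (i h) (i h')] with ω e1 e2 e3 e4 e5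
    rw [e1, e4, e5, Pi.add_apply, Pi.add_apply, e2, e3]
  have hismul : ∀ (r : ℝ) h, i (r • h) = r • i h := by
    intro r h
    refine Lp.ext ?_
    filter_upwards [hicoe (r • h), hicoe h, Lp.coeFn_smul r h,
      Lp.coeFn_smul r (i h)] with ω e1 e2 e3 e4
    rw [e1, e3, e4, Pi.smul_apply, Pi.smul_apply, e2]
  set ψlin : Lp ℝ 2 P →ₗ[ℝ] ℝ :=
    { toFun := fun h => φ (i h)
      map_add' := fun h h' => by
        show φ (i (h + h')) = φ (i h) + φ (i h')
        rw [hiadd]; exact φ.map_add _ _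
      map_smul' := fun r h => by
        show φ (i (r • h)) = (RingHom.id ℝ) r • φ (i h)
        rw [hismul]; simp } with hψlin
  have hψbound : ∀ h, ‖ψlin h‖ ≤ ‖φ‖ * ‖h‖ := fun h =>
    le_trans (φ.le_opNorm _) (mul_le_mul_of_nonneg_left (hinorm h) (norm_nonneg _))
  set ψ : Lp ℝ 2 P →L[ℝ] ℝ := LinearMap.mkContinuous ψlin ‖φ‖ hψbound with hψ
  set g₂ : Lp ℝ 2 P := (InnerProductSpace.toDual ℝ (Lp ℝ 2 P)).symm ψ with hg₂
  have hrep2 : ∀ h : Lp ℝ 2 P, φ (i h) = ∫ ω, (g₂ : Ω → ℝ) ω * (h : Ω → ℝ) ω ∂P := by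
    intro h
    have h1 : (inner ℝ g₂ h : ℝ) = ψ h := InnerProductSpace.toDual_symm_apply
    have h2 : ψ h = φ (i h) := rfl
    rw [← h2, ← h1, L2.inner_def]
    simp [RCLike.inner_apply]
    exact integral_congr_ae (Filter.Eventually.of_forall fun ω => mul_comm _ _)
  set g0 : Ω → ℝ := (g₂ : Ω → ℝ) with hg0
  have hg0sm : StronglyMeasurable g0 := Lp.stronglyMeasurable g₂
  have hg0int : Integrable g0 P :=
    memLp_one_iff_integrable.mp ((Lp.memLp g₂).mono_exponent one_le_two)
  set M := ‖φ‖ with hMdef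
  have hM0 : 0 ≤ M := norm_nonneg φ
  set A := {ω | M < |g0 ω|} with hA
  have hAmeas : MeasurableSet A := measurableSet_lt measurable_const hg0sm.measurable.abs
  have hbdd : ∀ᵐ ω ∂P, |g0 ω| ≤ M := by
    set sgn : Ω → ℝ := fun ω => if 0 ≤ g0 ω then 1 else -1 with hsgn
    have hsgnm : StronglyMeasurable sgn :=
      StronglyMeasurable.ite (measurableSet_le measurable_const hg0sm.measurable)
        stronglyMeasurable_const stronglyMeasurable_const
    set h : Ω → ℝ := A.indicator sgn with hh
    have hhm : StronglyMeasurable h := hsgnm.indicator hAmeas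
    have hhb : ∀ ω, ‖h ω‖ ≤ 1 := by
      intro ω
      rw [hh, Real.norm_eq_abs, Set.indicator]
      split
      · rw [hsgn]; dsimp only; split <;> norm_num
      · norm_num
    have hh2 : MemLp h 2 P :=
      (memLp_top_of_bound hhm.aestronglyMeasurable 1
        (Filter.Eventually.of_forall hhb)).mono_exponent le_top
    have key : φ (i (hh2.toLp h)) = ∫ ω, g0 ω * h ω ∂P := by
      rw [hrep2]
      refine integral_congr_ae ?_
      filter_upwards [hh2.coeFn_toLp] with ω e
      rw [e]
    have hval : ∫ ω, g0 ω * h ω ∂P = ∫ ω, A.indicator (fun ω => |g0 ω|) ω ∂P := by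
      refine integral_congr_ae (Filter.Eventually.of_forall fun ω => ?_)
      by_cases hω : ω ∈ A
      · simp only [hh, Set.indicator, hω, if_pos]
        exact mul_ite_sign _
      · simp [hh, Set.indicator, hω]
    have hnorm_le : ‖i (hh2.toLp h)‖ ≤ (P A).toReal := by
      rw [L1.norm_eq_integral_norm]
      have hb : ∀ᵐ ω ∂P, ‖(i (hh2.toLp h) : Ω → ℝ) ω‖ ≤ A.indicator (fun _ => (1:ℝ)) ω := by
        filter_upwards [hicoe (hh2.toLp h), hh2.coeFn_toLp] with ω e1 e2
        rw [e1, e2]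
        by_cases hω : ω ∈ A
        · simp only [hh, Set.indicator, hω, if_pos, hsgn]
          split <;> norm_num
        · simp [hh, Set.indicator, hω]
      calc ∫ ω, ‖(i (hh2.toLp h) : Ω → ℝ) ω‖ ∂P
          ≤ ∫ ω, A.indicator (fun _ => (1:ℝ)) ω ∂P := by
            refine integral_mono_ae ((L1.integrable_coeFn _).norm) ?_ hb
            exact (integrable_const (1:ℝ)).indicator hAmeas
        _ = (P A).toReal := by
            rw [integral_indicator hAmeas]
            simp [Measure.real]
    have hchain : ∫ ω, A.indicator (fun ω => |g0 ω|) ω ∂P ≤ M * (P A).toReal := by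
      calc ∫ ω, A.indicator (fun ω => |g0 ω|) ω ∂P = φ (i (hh2.toLp h)) := by rw [key, hval]
        _ ≤ ‖φ (i (hh2.toLp h))‖ := le_abs_self _
        _ ≤ ‖φ‖ * ‖i (hh2.toLp h)‖ := φ.le_opNorm _
        _ ≤ M * (P A).toReal := mul_le_mul_of_nonneg_left hnorm_le hM0
    set F : Ω → ℝ := A.indicator (fun ω => |g0 ω| - M) with hF
    have hFnn : ∀ ω, 0 ≤ F ω := by
      intro ω
      by_cases hω : ω ∈ A
      · have hlt : M < |g0 ω| := hω
        simp only [hF, Set.indicator, hω, if_pos]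
        linarith
      · simp [hF, Set.indicator, hω]
    have hFint : Integrable F P := (hg0int.abs.sub (integrable_const M)).indicator hAmeas
    have hFval : ∫ ω, F ω ∂P
        = ∫ ω, A.indicator (fun ω => |g0 ω|) ω ∂P - M * (P A).toReal := by
      have he : F = fun ω => A.indicator (fun ω => |g0 ω|) ω - A.indicator (fun _ => M) ω := by
        funext ω
        by_cases hω : ω ∈ A <;> simp [hF, Set.indicator, hω]
      rw [he, integral_sub (hg0int.abs.indicator hAmeas) ((integrable_const M).indicator hAmeas),
        integral_indicator (f := fun _ => M) hAmeas, setIntegral_const]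
      simp [smul_eq_mul, mul_comm, Measure.real]
    have hF0 : ∫ ω, F ω ∂P = 0 :=
      le_antisymm (by rw [hFval]; linarith) (integral_nonneg hFnn)
    have hFae := (integral_eq_zero_iff_of_nonneg hFnn hFint).mp hF0
    filter_upwards [hFae] with ω hω
    by_contra hcon
    push_neg at hcon
    have hωA : ω ∈ A := hcon
    have hz : F ω = 0 := hω
    simp only [hF, Set.indicator, hωA, if_pos] at hz
    have hlt : M < |g0 ω| := hωA
    linarith
  set g : Ω → ℝ := fun ω => if |g0 ω| ≤ M then g0 ω else 0 with hgdef
  have hgsm : StronglyMeasurable g :=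
    StronglyMeasurable.ite (measurableSet_le hg0sm.measurable.abs measurable_const)
      hg0sm stronglyMeasurable_const
  have hgb : ∀ ω, |g ω| ≤ M := by
    intro ω
    by_cases hc : |g0 ω| ≤ M <;> simp [hgdef, hc, hM0]
  have hgae : g =ᵐ[P] g0 := by
    filter_upwards [hbdd] with ω hω
    simp [hgdef, hω]
  refine ⟨g, hgsm, hgb, ?_⟩
  have hint : ∀ u : Lp ℝ 1 P, Integrable (fun ω => g ω * (u : Ω → ℝ) ω) P := fun u =>
    Integrable.bdd_mul (L1.integrable_coeFn u) hgsm.aestronglyMeasurable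
      (Filter.Eventually.of_forall fun ω => by simpa using hgb ω)
  refine Lp.induction (E := ℝ) (μ := P) (p := 1) ENNReal.one_ne_top
    (fun u => φ u = ∫ ω, g ω * (u : Ω → ℝ) ω ∂P) ?_ ?_ ?_
  · intro cst s hs hμs
    have hk2 : MemLp (s.indicator fun _ => cst) 2 P :=
      memLp_indicator_const 2 hs cst (Or.inr hμs.ne)
    have heq : (↑(Lp.simpleFunc.indicatorConst 1 hs hμs.ne cst) : Lp ℝ 1 P)
        = i (hk2.toLp _) := by
      refine Lp.ext ?_
      rw [Lp.simpleFunc.coe_indicatorConst]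
      filter_upwards [hicoe (hk2.toLp _), hk2.coeFn_toLp,
        indicatorConstLp_coeFn (p := 1) (μ := P) (hs := hs) (hμs := hμs.ne) (c := cst)]
        with ω e1 e2 e3
      rw [e1, e2, e3]
    rw [heq, hrep2]
    refine integral_congr_ae ?_
    filter_upwards [hk2.coeFn_toLp, hicoe (hk2.toLp _), hgae] with ω e1 e2 e3
    rw [e2, e1, e3]
  · intro f g' hf hg' hdisj hPf hPg'
    rw [φ.map_add, hPf, hPg']
    have : ∫ ω, g ω * ((↑(hf.toLp f + hg'.toLp g') : Ω → ℝ)) ω ∂P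
        = ∫ ω, (g ω * (hf.toLp f : Ω → ℝ) ω + g ω * (hg'.toLp g' : Ω → ℝ) ω) ∂P := by
      refine integral_congr_ae ?_
      filter_upwards [Lp.coeFn_add (hf.toLp f) (hg'.toLp g')] with ω e
      rw [e, Pi.add_apply, mul_add]
    rw [this, integral_add (hint _) (hint _)]
  · have hcont : Continuous fun u : Lp ℝ 1 P => ∫ ω, g ω * (u : Ω → ℝ) ω ∂P := by
      refine continuous_iff_continuousAt.mpr fun u => ?_
      rw [Metric.continuousAt_iff]
      intro ε hε
      rcases eq_or_lt_of_le hM0 with hM | hM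
      · refine ⟨1, one_pos, fun {v} hv => ?_⟩
        have hgz : ∀ ω, g ω = 0 := fun ω => by
          have := hgb ω
          rw [← hM] at this
          exact abs_eq_zero.mp (le_antisymm this (abs_nonneg _))
        simp [hgz, hε]
      · refine ⟨ε / M, div_pos hε hM, fun {v} hv => ?_⟩
        rw [Real.dist_eq]
        have h1 : ∫ ω, g ω * (v : Ω → ℝ) ω ∂P - ∫ ω, g ω * (u : Ω → ℝ) ω ∂P
            = ∫ ω, g ω * ((v : Ω → ℝ) ω - (u : Ω → ℝ) ω) ∂P := by
          rw [← integral_sub (hint v) (hint u)]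
          refine integral_congr_ae (Filter.Eventually.of_forall fun ω => ?_)
          ring
        have h2 : |∫ ω, g ω * ((v : Ω → ℝ) ω - (u : Ω → ℝ) ω) ∂P|
            ≤ ∫ ω, M * |(v : Ω → ℝ) ω - (u : Ω → ℝ) ω| ∂P := by
          refine le_trans (by
            simpa [Real.norm_eq_abs] using norm_integral_le_integral_norm (μ := P)
              (f := fun ω => g ω * ((v : Ω → ℝ) ω - (u : Ω → ℝ) ω))) ?_
          refine integral_mono_ae ?_ ?_ ?_
          · exact Integrable.bdd_mul ((L1.integrable_coeFn v).sub (L1.integrable_coeFn u)).abs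
              (hgsm.measurable.abs.stronglyMeasurable).aestronglyMeasurable (Filter.Eventually.of_forall fun ω => by simpa [abs_abs] using hgb ω)
          · exact (((L1.integrable_coeFn v).sub (L1.integrable_coeFn u)).abs.const_mul M)
          · refine Filter.Eventually.of_forall fun ω => ?_
            exact mul_le_mul_of_nonneg_right (hgb ω) (abs_nonneg _)
        have h3 : ∫ ω, M * |(v : Ω → ℝ) ω - (u : Ω → ℝ) ω| ∂P = M * ‖v - u‖ := by
          rw [L1.norm_eq_integral_norm, ← integral_const_mul]
          refine integral_congr_ae ?_
          filter_upwards [Lp.coeFn_sub v u] with ω e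
          rw [e, Pi.sub_apply]
          simp [Real.norm_eq_abs]
        calc |∫ ω, g ω * (v : Ω → ℝ) ω ∂P - ∫ ω, g ω * (u : Ω → ℝ) ω ∂P|
            = |∫ ω, g ω * ((v : Ω → ℝ) ω - (u : Ω → ℝ) ω) ∂P| := by rw [h1]
          _ ≤ ∫ ω, M * |(v : Ω → ℝ) ω - (u : Ω → ℝ) ω| ∂P := h2
          _ = M * ‖v - u‖ := h3
          _ < M * (ε / M) := by
              refine mul_lt_mul_of_pos_left ?_ hM
              rw [dist_eq_norm] at hv
              exact hv
          _ = ε := by field_simp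
    exact isClosed_eq φ.continuous hcont

end Dual

section Main
open Topology
set_option linter.unusedSectionVars false
set_option linter.unusedVariables false
set_option maxHeartbeats 1000000
set_option synthInstance.maxHeartbeats 400000

variable (P : Measure Ω) [IsProbabilityMeasure P] (ℱ : Filtration (Fin (T + 1)) m0)
variable (S : CostProcess ℱ J) (D : ConstraintProcess ℱ J)

lemma K_isClosed
    (hcomp : ∀ (t : Fin (T + 1)) (s : Set Ω), P s = 0 → MeasurableSet[ℱ t] s)
    (hcl : ClosedInProb P ℱ (Cset P ℱ S D)) :
    IsClosed {a : Fin (T + 1) → Lp ℝ 1 P |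
      ∃ c' ∈ Cset P ℱ S D ∩ M1 P ℱ, ∀ t, (a t : Ω → ℝ) =ᵐ[P] c' t} := by
  classical
  refine IsSeqClosed.isClosed ?_
  intro as a has ha
  choose cs hcs hcoe using has
  set r : Fin (T + 1) → Ω → ℝ := fun t => (a t : Ω → ℝ) with hr
  have hrSM : ∀ t, StronglyMeasurable (r t) := fun t => Lp.stronglyMeasurable _
  have hcsSM : ∀ n t, StronglyMeasurable (cs n t) :=
    fun n t => (((hcs n).1.1 t).mono (ℱ.le t) le_rfl).stronglyMeasurable
  have hcsInt : ∀ n t, Integrable (cs n t) P := fun n t => (hcs n).2.2 t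
  -- componentwise L¹ convergence
  have hL1 : ∀ t, Tendsto (fun n => eLpNorm (cs n t - r t) 1 P) atTop (𝓝 0) := by
    intro t
    have h1 : Tendsto (fun n => as n t) atTop (𝓝 (a t)) :=
      ((continuous_apply t).tendsto a).comp ha
    have h2 := (Lp.tendsto_Lp_iff_tendsto_eLpNorm' _ _).mp h1
    refine h2.congr fun n => ?_
    refine eLpNorm_congr_ae ?_
    filter_upwards [hcoe n t] with ω e1
    simp only [Pi.sub_apply]
    rw [e1]
  -- the scalar control sequence
  set F : ℕ → Ω → ℝ := fun n ω => ∑ t, |cs n t ω - r t ω| with hF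
  have hFSM : ∀ n, StronglyMeasurable (F n) := by
    intro n
    refine Finset.stronglyMeasurable_fun_sum _ fun t _ => ?_
    exact (((hcsSM n t).sub (hrSM t)).measurable.abs).stronglyMeasurable
  have hFmeas : TendstoInMeasure P F atTop (fun _ => 0) := by
    refine tendstoInMeasure_of_tendsto_eLpNorm (p := 1) one_ne_zero
      (fun n => (hFSM n).aestronglyMeasurable) aestronglyMeasurable_const ?_
    have hb : ∀ n, eLpNorm (F n - (fun _ => 0)) 1 P ≤ ∑ t, eLpNorm (cs n t - r t) 1 P := by
      intro n
      have he : F n - (fun _ => 0) = ∑ t, fun ω => |cs n t ω - r t ω| := by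
        funext ω
        simp [hF, Finset.sum_apply]
      rw [he]
      refine le_trans (eLpNorm_sum_le (fun t _ =>
        ((((hcsSM n t).sub (hrSM t)).measurable.abs).stronglyMeasurable).aestronglyMeasurable)
        le_rfl) ?_
      refine Finset.sum_le_sum fun t _ => ?_
      refine le_of_eq (eLpNorm_congr_norm_ae ?_)
      refine Filter.Eventually.of_forall fun ω => ?_
      simp [abs_abs]
    have hsum : Tendsto (fun n => ∑ t, eLpNorm (cs n t - r t) 1 P) atTop (𝓝 0) := by
      have := tendsto_finset_sum (Finset.univ : Finset (Fin (T + 1))) (fun t _ => hL1 t)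
      simpa using this
    exact tendsto_of_tendsto_of_tendsto_of_le_of_le tendsto_const_nhds hsum
      (fun n => zero_le) hb
  obtain ⟨ns, hns, hae⟩ := hFmeas.exists_seq_tendsto_ae
  -- a.e. pointwise convergence of each component along ns
  have haet : ∀ t, ∀ᵐ ω ∂P, Tendsto (fun k => cs (ns k) t ω) atTop (𝓝 (r t ω)) := by
    intro t
    filter_upwards [hae] with ω hω
    have hle : ∀ k, dist (cs (ns k) t ω) (r t ω) ≤ dist (F (ns k) ω) 0 := by
      intro k
      rw [Real.dist_eq, Real.dist_eq, sub_zero]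
      have h1 : |cs (ns k) t ω - r t ω| ≤ F (ns k) ω := by
        refine Finset.single_le_sum (f := fun t => |cs (ns k) t ω - r t ω|)
          (fun s _ => abs_nonneg _) (Finset.mem_univ t)
      refine h1.trans (le_abs_self _)
    rw [tendsto_iff_dist_tendsto_zero]
    exact squeeze_zero (fun k => dist_nonneg) hle (tendsto_iff_dist_tendsto_zero.mp hω)
  -- the adapted limit
  set N : Fin (T + 1) → Set Ω :=
    fun t => {ω | ¬ Tendsto (fun k => cs (ns k) t ω) atTop (𝓝 (r t ω))} with hN
  have hNnull : ∀ t, P (N t) = 0 := fun t => ae_iff.mp (haet t)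
  have hNmeas : ∀ t, MeasurableSet[ℱ t] (N t) := fun t => hcomp t _ (hNnull t)
  set climit : Fin (T + 1) → Ω → ℝ := fun t => (N t).piecewise 0 (r t) with hclimit
  have hclimitSM : ∀ t, StronglyMeasurable[ℱ t] (climit t) := by
    intro t
    refine stronglyMeasurable_of_tendsto (f := fun k => (N t).piecewise 0 (cs (ns k) t))
      atTop (fun k => StronglyMeasurable.piecewise (hNmeas t)
        stronglyMeasurable_const ((hcs (ns k)).1.1 t).stronglyMeasurable) ?_
    rw [tendsto_pi_nhds]
    intro ω
    simp only [hclimit]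
    by_cases hω : ω ∈ N t
    · have hpe : ∀ (f g : Ω → ℝ), (N t).piecewise f g ω = f ω :=
        fun f g => Set.piecewise_eq_of_mem _ _ _ hω
      simp only [hpe, Pi.zero_apply]
      exact tendsto_const_nhds
    · have hpe : ∀ (f g : Ω → ℝ), (N t).piecewise f g ω = g ω :=
        fun f g => Set.piecewise_eq_of_notMem _ _ _ hω
      simp only [hpe]
      exact not_not.mp hω
  have hclimit_ae : ∀ t, climit t =ᵐ[P] r t := by
    intro t
    have : ∀ ω, ω ∉ N t → climit t ω = r t ω := fun ω hω =>
      Set.piecewise_eq_of_notMem _ _ _ hω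
    refine Filter.eventuallyEq_of_mem (s := (N t)ᶜ) ?_ this
    rw [mem_ae_iff, compl_compl]
    exact hNnull t
  have hmem : climit ∈ Cset P ℱ S D := by
    refine hcl (fun k => cs (ns k)) (fun k => (hcs (ns k)).1) climit
      (fun t => (hclimitSM t).measurable) ?_
    intro t
    refine tendstoInMeasure_of_tendsto_ae (fun k => (hcsSM (ns k) t).aestronglyMeasurable) ?_
    filter_upwards [haet t, hclimit_ae t] with ω h1 h2
    rw [h2]
    exact h1
  refine ⟨climit, ⟨hmem, ⟨fun t => (hclimitSM t).measurable, fun t => ?_⟩⟩, fun t => (hclimit_ae t).symm⟩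
  exact (L1.integrable_coeFn (a t)).congr (hclimit_ae t).symm


/-- Theorem 5, part 1: if `C` is closed in probability then an integrable
claim process belongs to `C` iff `E ∑ₜ cₜ yₜ ≤ 1` for every essentially bounded `y` with
`σ_{C¹}(y) ≤ 1`. -/
theorem mem_Cset_iff_pairing_le_one
    (P : Measure Ω) [IsProbabilityMeasure P] (ℱ : Filtration (Fin (T + 1)) m0)
    (hcomp : ∀ (t : Fin (T + 1)) (s : Set Ω), P s = 0 → MeasurableSet[ℱ t] s)
    (S : CostProcess ℱ J) (D : ConstraintProcess ℱ J)
    (hcl : ClosedInProb P ℱ (Cset P ℱ S D)) :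
    ∀ c ∈ M1 P ℱ, (c ∈ Cset P ℱ S D ↔
      ∀ y ∈ Minf P ℱ, sigmaSup P (Cset P ℱ S D ∩ M1 P ℱ) y ≤ 1 →
        pairing P c y ≤ 1) := by
  classical
  intro c hc
  constructor
  · intro hcC y hyM hσ
    have hmem : ((pairing P c y : ℝ) : EReal)
        ∈ (fun c' => ((pairing P c' y : ℝ) : EReal)) '' (Cset P ℱ S D ∩ M1 P ℱ) :=
      ⟨c, ⟨hcC, hc⟩, rfl⟩
    have h2 : ((pairing P c y : ℝ) : EReal) ≤ ((1 : ℝ) : EReal) := by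
      refine le_trans (le_sSup hmem) ?_
      rw [EReal.coe_one]
      exact hσ
    exact_mod_cast h2
  · intro hpair
    by_contra hcC
    set K : Set (Fin (T + 1) → Lp ℝ 1 P) := {a | ∃ c' ∈ Cset P ℱ S D ∩ M1 P ℱ,
      ∀ t, (a t : Ω → ℝ) =ᵐ[P] c' t} with hK
    have hKclosed : IsClosed K := K_isClosed P ℱ S D hcomp hcl
    have hKconv : Convex ℝ K := by
      rintro a₁ ⟨c₁, hc₁, he₁⟩ a₂ ⟨c₂, hc₂, he₂⟩ p q hp hq hpq
      refine ⟨fun t ω => p * c₁ t ω + q * c₂ t ω,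
        ⟨Cset_convex P ℱ S D hc₁.1 hc₂.1 hp hq hpq,
          ⟨fun t => ((hc₁.2.1 t).const_mul p).add ((hc₂.2.1 t).const_mul q),
           fun t => ((hc₁.2.2 t).const_mul p).add ((hc₂.2.2 t).const_mul q)⟩⟩, ?_⟩
      intro t
      have hrfl : (p • a₁ + q • a₂) t = p • a₁ t + q • a₂ t := rfl
      rw [hrfl]
      filter_upwards [Lp.coeFn_add (p • a₁ t) (q • a₂ t), Lp.coeFn_smul p (a₁ t),
        Lp.coeFn_smul q (a₂ t), he₁ t, he₂ t] with ω e1 e2 e3 e4 e5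
      rw [e1, Pi.add_apply, e2, e3, Pi.smul_apply, Pi.smul_apply, e4, e5,
        smul_eq_mul, smul_eq_mul]
    set aHat : Fin (T + 1) → Lp ℝ 1 P :=
      fun t => (memLp_one_iff_integrable.mpr (hc.2 t)).toLp (c t) with haHat
    have haHatnotK : aHat ∉ K := by
      rintro ⟨c', hc', he⟩
      refine hcC (Cset_congr_ae P ℱ S D hc'.1 hc.1 fun t => ?_)
      exact ((memLp_one_iff_integrable.mpr (hc.2 t)).coeFn_toLp.symm.trans (he t))
    obtain ⟨f, u, hfu, hufaHat⟩ := geometric_hahn_banach_closed_point hKconv hKclosed haHatnotK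
    have hu0 : 0 < u := by
      have h0K : (0 : Fin (T + 1) → Lp ℝ 1 P) ∈ K := by
        refine ⟨0, ⟨zero_mem_Cset P ℱ S D, zero_mem_M1 P ℱ⟩, fun t => ?_⟩
        simpa using Lp.coeFn_zero (E := ℝ) (p := 1) (μ := P)
      have := hfu 0 h0K
      simpa using this
    set sing : Fin (T + 1) → (Lp ℝ 1 P →L[ℝ] (Fin (T + 1) → Lp ℝ 1 P)) :=
      fun t => ContinuousLinearMap.pi
        (fun s => if s = t then ContinuousLinearMap.id ℝ _ else 0) with hsing
    have hsing_apply : ∀ t (v : Lp ℝ 1 P) s, sing t v s = if s = t then v else 0 := by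
      intro t v s
      rw [hsing]
      rw [ContinuousLinearMap.pi_apply]
      split <;> simp
    have hdecomp : ∀ a : Fin (T + 1) → Lp ℝ 1 P, ∑ t, sing t (a t) = a := by
      intro a
      funext s
      rw [Finset.sum_apply]
      rw [Finset.sum_congr rfl (fun t _ => hsing_apply t (a t) s)]
      simp [Finset.sum_ite_eq]
    choose gs hgsSM hgsB hgsRep using fun t : Fin (T + 1) => L1_dual_rep P (f.comp (sing t))
    set B : Fin (T + 1) → ℝ := fun t => ‖f.comp (sing t)‖ with hB
    have hB0 : ∀ t, 0 ≤ B t := fun t => norm_nonneg _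
    have hgsInt : ∀ t, Integrable (gs t) P := fun t =>
      memLp_one_iff_integrable.mp ((memLp_top_of_bound (hgsSM t).aestronglyMeasurable (B t)
        (Filter.Eventually.of_forall fun ω => by
          simpa using hgsB t ω)).mono_exponent le_top)
    set y1 : Fin (T + 1) → Ω → ℝ := fun t => P[gs t | ℱ t] with hy1
    have hy1SM : ∀ t, StronglyMeasurable[ℱ t] (y1 t) := fun t => stronglyMeasurable_condExp
    have hy1b : ∀ t, ∀ᵐ ω ∂P, |y1 t ω| ≤ B t := by
      intro t
      have hup : y1 t ≤ᵐ[P] fun _ => B t := by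
        have h1 := condExp_mono (m := ℱ t) (μ := P) (hgsInt t) (integrable_const (B t))
          (Filter.Eventually.of_forall fun ω => (abs_le.mp (hgsB t ω)).2)
        rwa [condExp_const (ℱ.le t)] at h1
      have hdown : (fun _ => -B t) ≤ᵐ[P] y1 t := by
        have h1 := condExp_mono (m := ℱ t) (μ := P) (integrable_const (-B t)) (hgsInt t)
          (Filter.Eventually.of_forall fun ω => (abs_le.mp (hgsB t ω)).1)
        rwa [condExp_const (ℱ.le t)] at h1
      filter_upwards [hup, hdown] with ω h1 h2
      exact abs_le.mpr ⟨h2, h1⟩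
    set y : Fin (T + 1) → Ω → ℝ := fun t ω => max (-(B t)) (min (B t) (y1 t ω)) with hy
    have hySM : ∀ t, StronglyMeasurable[ℱ t] (y t) := fun t =>
      (measurable_const.max (measurable_const.min (hy1SM t).measurable)).stronglyMeasurable
    have hyb : ∀ t ω, |y t ω| ≤ B t := by
      intro t ω
      rw [abs_le]
      refine ⟨le_max_left _ _, max_le (by linarith [hB0 t]) (min_le_left _ _)⟩
    have hyy1 : ∀ t, y t =ᵐ[P] y1 t := by
      intro t
      filter_upwards [hy1b t] with ω hω
      have h1 := abs_le.mp hω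
      show max (-(B t)) (min (B t) (y1 t ω)) = y1 t ω
      rw [min_eq_right h1.2, max_eq_right h1.1]
    have hkey : ∀ (c' : Fin (T + 1) → Ω → ℝ) (hcm : c' ∈ M1 P ℱ),
        f (fun t => (memLp_one_iff_integrable.mpr (hcm.2 t)).toLp (c' t))
          = pairing P c' y := by
      intro c' hcm
      have hint_cy : ∀ t, Integrable (fun ω => c' t ω * y t ω) P := by
        intro t
        have h1 := Integrable.bdd_mul (hcm.2 t)
          (((hySM t).mono (ℱ.le t)).aestronglyMeasurable)
          (Filter.Eventually.of_forall fun ω => by simpa using hyb t ω)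
        exact h1.congr (Filter.Eventually.of_forall fun ω => mul_comm _ _)
      have hterm : ∀ t, ∫ ω, c' t ω * y t ω ∂P
          = f.comp (sing t) ((memLp_one_iff_integrable.mpr (hcm.2 t)).toLp (c' t)) := by
        intro t
        have hint_cg : Integrable (c' t * gs t) P := by
          have h1 := Integrable.bdd_mul (hcm.2 t) (hgsSM t).aestronglyMeasurable
            (Filter.Eventually.of_forall fun ω => by simpa using hgsB t ω)
          exact h1.congr (Filter.Eventually.of_forall fun ω => mul_comm _ _)
        have e1 : ∫ ω, c' t ω * y t ω ∂P = ∫ ω, c' t ω * y1 t ω ∂P := by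
          refine integral_congr_ae ?_
          filter_upwards [hyy1 t] with ω e
          rw [e]
        have e2 : ∫ ω, c' t ω * y1 t ω ∂P = ∫ ω, (c' t * gs t) ω ∂P := by
          have hmul := condExp_mul_of_stronglyMeasurable_left (μ := P) (m := ℱ t) (hcm.1 t).stronglyMeasurable
            hint_cg (hgsInt t)
          calc ∫ ω, c' t ω * y1 t ω ∂P = ∫ ω, (P[c' t * gs t | ℱ t]) ω ∂P := by
                refine integral_congr_ae ?_
                filter_upwards [hmul] with ω e
                rw [e]
                rfl
            _ = ∫ ω, (c' t * gs t) ω ∂P := integral_condExp (ℱ.le t)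
        have e3 : ∫ ω, (c' t * gs t) ω ∂P = ∫ ω, gs t ω *
            (((memLp_one_iff_integrable.mpr (hcm.2 t)).toLp (c' t) : Ω → ℝ)) ω ∂P := by
          refine integral_congr_ae ?_
          filter_upwards [(memLp_one_iff_integrable.mpr (hcm.2 t)).coeFn_toLp] with ω e
          rw [Pi.mul_apply]
          rw [e]
          exact mul_comm _ _
        rw [e1, e2, e3, ← hgsRep t]
      have hps : pairing P c' y = ∑ t, ∫ ω, c' t ω * y t ω ∂P := by
        simp only [pairing]
        rw [integral_finset_sum Finset.univ (fun t _ => hint_cy t)]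
      rw [hps]
      calc f (fun t => (memLp_one_iff_integrable.mpr (hcm.2 t)).toLp (c' t))
          = f (∑ t, sing t ((memLp_one_iff_integrable.mpr (hcm.2 t)).toLp (c' t))) := by
            rw [hdecomp]
        _ = ∑ t, f (sing t ((memLp_one_iff_integrable.mpr (hcm.2 t)).toLp (c' t))) := by
            rw [map_sum]
        _ = ∑ t, ∫ ω, c' t ω * y t ω ∂P :=
            Finset.sum_congr rfl fun t _ => (hterm t).symm
    set β : ℝ := (u + f aHat) / 2 with hβ
    have hβu : u < β := by rw [hβ]; linarith
    have hβfaHat : β < f aHat := by rw [hβ]; linarith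
    have hβ0 : 0 < β := lt_trans hu0 hβu
    set y' : Fin (T + 1) → Ω → ℝ := fun t ω => β⁻¹ * y t ω with hy'
    have hy'Minf : y' ∈ Minf P ℱ := by
      refine ⟨fun t => ((hySM t).const_mul β⁻¹).measurable, fun t => ?_⟩
      refine memLp_top_of_bound (((hySM t).mono (ℱ.le t)).aestronglyMeasurable.const_mul β⁻¹)
        (|β⁻¹| * B t) (Filter.Eventually.of_forall fun ω => ?_)
      rw [Real.norm_eq_abs, abs_mul]
      exact mul_le_mul_of_nonneg_left (hyb t ω) (abs_nonneg _)
    have hpairy' : ∀ c'' : Fin (T + 1) → Ω → ℝ,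
        pairing P c'' y' = β⁻¹ * pairing P c'' y := by
      intro c''
      have hpt : (fun ω => ∑ t, c'' t ω * y' t ω) = fun ω => β⁻¹ * ∑ t, c'' t ω * y t ω := by
        funext ω
        rw [Finset.mul_sum]
        refine Finset.sum_congr rfl fun t _ => ?_
        rw [hy']
        ring
      simp only [pairing]
      rw [hpt, integral_const_mul]
    have hσ : sigmaSup P (Cset P ℱ S D ∩ M1 P ℱ) y' ≤ 1 := by
      refine sSup_le ?_
      rintro z ⟨c'', hc'', rfl⟩
      have h1 : pairing P c'' y
          = f (fun t => (memLp_one_iff_integrable.mpr (hc''.2.2 t)).toLp (c'' t)) :=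
        (hkey c'' hc''.2).symm
      have h2 : (fun t => (memLp_one_iff_integrable.mpr (hc''.2.2 t)).toLp (c'' t)) ∈ K :=
        ⟨c'', hc'', fun t => (memLp_one_iff_integrable.mpr (hc''.2.2 t)).coeFn_toLp⟩
      have h3 : pairing P c'' y < u := by rw [h1]; exact hfu _ h2
      have h4 : pairing P c'' y' < 1 := by
        rw [hpairy' c'']
        calc β⁻¹ * pairing P c'' y < β⁻¹ * u := by
              exact mul_lt_mul_of_pos_left h3 (inv_pos.mpr hβ0)
          _ < β⁻¹ * β := mul_lt_mul_of_pos_left hβu (inv_pos.mpr hβ0)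
          _ = 1 := inv_mul_cancel₀ hβ0.ne'
      have h5 : ((pairing P c'' y' : ℝ) : EReal) ≤ ((1 : ℝ) : EReal) := by
        exact_mod_cast h4.le
      rw [EReal.coe_one] at h5
      exact h5
    have hle1 := hpair y' hy'Minf hσ
    have hgt1 : 1 < pairing P c y' := by
      rw [hpairy' c]
      have h1 : pairing P c y = f aHat := by
        have h2 := hkey c hc
        rw [← h2]
      rw [h1]
      calc (1 : ℝ) = β⁻¹ * β := (inv_mul_cancel₀ hβ0.ne').symm
        _ < β⁻¹ * f aHat := mul_lt_mul_of_pos_left hβfaHat (inv_pos.mpr hβ0)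
    linarith

end Main
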